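/- The set H = {a_{ij} : i,j ∈ [d]} ∪ {h_{kl} : 1 ≤ k < l ≤ d} generates Q_sat(A) as a monoid: every element of Q_sat is a nonnegative integer combination of elements of H. -/

import Mathlib

open Finset

/-- The column `a_{ij}` of the CDEM matrix: 1 in coordinate `j`, 1 in coordinate
`d + i`, 1 in coordinate `2d` (the last one) iff `i = j`, and 0 elsewhere
(coordinates are 0-based). -/
def acol (d : ℕ) (i j : Fin d) : Fin (2 * d + 1) → ℤ := fun t =>
  (if (t : ℕ) = (j : ℕ) then 1 else 0) +
  (if (t : ℕ) = d + (i : ℕ) then 1 else 0) +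
  (if (t : ℕ) = 2 * d ∧ i = j then 1 else 0)

/-- The vector `h_{kl} = (a_{ll} + a_{lk} + a_{kl} + a_{kk}) / 2`. -/
def hvec (d : ℕ) (k l : Fin d) : Fin (2 * d + 1) → ℤ := fun t =>
  (acol d l l t + acol d l k t + acol d k l t + acol d k k t) / 2

/-- The CDEM semigroup: nonnegative integer combinations of the columns. -/
def cdemQ (d : ℕ) : Set (Fin (2 * d + 1) → ℤ) :=
  {b | ∃ x : Fin d → Fin d → ℕ, b = fun t => ∑ i, ∑ j, (x i j : ℤ) * acol d i j t}

/-- The real cone `K(A)` generated by the CDEM columns. -/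
def cdemCone (d : ℕ) (v : Fin (2 * d + 1) → ℝ) : Prop :=
  ∃ x : Fin d → Fin d → ℝ, (∀ i j, 0 ≤ x i j) ∧
    v = fun t => ∑ i, ∑ j, x i j * (acol d i j t : ℝ)

/-- The saturation `Q_sat = K(A) ∩ ℤ^{2d+1}` of the CDEM semigroup. -/
def cdemQsat (d : ℕ) : Set (Fin (2 * d + 1) → ℤ) :=
  {b | cdemCone d fun t => (b t : ℝ)}

/-- The `i`-th coordinate (0-based, `i < d`) as an index into `Fin (2d+1)`. -/
def idx1 (d : ℕ) (i : Fin d) : Fin (2 * d + 1) := ⟨(i : ℕ), by have := i.isLt; omega⟩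

/-- The `(d+i)`-th coordinate as an index into `Fin (2d+1)`. -/
def idx2 (d : ℕ) (i : Fin d) : Fin (2 * d + 1) := ⟨d + (i : ℕ), by have := i.isLt; omega⟩

lemma hvec_apply {d : ℕ} (k l : Fin d) (hkl : k ≠ l) (t : Fin (2 * d + 1)) :
    hvec d k l t = (if (t : ℕ) = (k : ℕ) then 1 else 0) + (if (t : ℕ) = (l : ℕ) then 1 else 0)
      + (if (t : ℕ) = d + (k : ℕ) then 1 else 0) + (if (t : ℕ) = d + (l : ℕ) then 1 else 0)
      + (if (t : ℕ) = 2 * d then 1 else 0) := by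
  have hkl' : (k : ℕ) ≠ (l : ℕ) := fun h => hkl (Fin.ext h)
  have h1 := k.isLt; have h2 := l.isLt
  have hnum : acol d l l t + acol d l k t + acol d k l t + acol d k k t =
      2 * ((if (t : ℕ) = (k : ℕ) then 1 else 0) + (if (t : ℕ) = (l : ℕ) then 1 else 0)
      + (if (t : ℕ) = d + (k : ℕ) then 1 else 0) + (if (t : ℕ) = d + (l : ℕ) then 1 else 0)
      + (if (t : ℕ) = 2 * d then 1 else 0)) := by
    simp only [acol, hkl, hkl.symm, and_true, and_false, if_false]
    split_ifs <;> omega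
  rw [hvec, hnum, Int.mul_ediv_cancel_left _ (by norm_num)]

section helpers
variable {d : ℕ}


lemma sub_ind (f : Fin d → ℤ) (i0 : Fin d) :
    ∑ m, (f m - if m = i0 then 1 else 0) = (∑ m, f m) - 1 := by
  rw [Finset.sum_sub_distrib]
  simp [Finset.sum_ite_eq']

lemma sub_ind2 (f : Fin d → ℤ) (k0 l0 : Fin d) (h : k0 ≠ l0) :
    ∑ m, (f m - (if m = k0 then 1 else 0) - (if m = l0 then 1 else 0)) = (∑ m, f m) - 2 := by
  rw [sub_ind (fun m => f m - if m = k0 then 1 else 0) l0, sub_ind]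
  ring

lemma single_le (f : Fin d → ℤ) (hf : ∀ m, 0 ≤ f m) (i : Fin d) : f i ≤ ∑ m, f m :=
  Finset.single_le_sum (fun m _ => hf m) (mem_univ i)

lemma pair_le_sum (f : Fin d → ℤ) (hf : ∀ m, 0 ≤ f m) {k l : Fin d} (hkl : k ≠ l) :
    f k + f l ≤ ∑ m, f m := by
  rw [← Finset.sum_pair hkl]
  exact Finset.sum_le_sum_of_subset_of_nonneg (subset_univ _) (fun m _ _ => hf m)

lemma exists_one_le {s : Finset (Fin d)} {f : Fin d → ℤ} (hf : ∀ m ∈ s, 0 ≤ f m)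
    (h : 1 ≤ ∑ m ∈ s, f m) : ∃ m ∈ s, 1 ≤ f m := by
  by_contra hcon
  push_neg at hcon
  have : ∑ m ∈ s, f m ≤ 0 := Finset.sum_nonpos (fun m hm => by have := hcon m hm; omega)
  omega

lemma singlevanish {f : Fin d → ℤ} (hf : ∀ m, 0 ≤ f m) {i : Fin d}
    (h : ∑ m, f m ≤ f i) : ∀ m, m ≠ i → f m = 0 := by
  have he : ∑ m ∈ univ.erase i, f m = (∑ m, f m) - f i := by
    rw [Finset.sum_erase_eq_sub (mem_univ i)]
  have hz : ∑ m ∈ univ.erase i, f m = 0 :=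
    le_antisymm (by omega) (Finset.sum_nonneg fun m _ => hf m)
  intro m hm
  exact (Finset.sum_eq_zero_iff_of_nonneg fun m' _ => hf m').1 hz m (by simp [hm])

lemma pairvanish {f : Fin d → ℤ} (hf : ∀ m, 0 ≤ f m) {k l : Fin d} (hkl : k ≠ l)
    (h : ∑ m, f m ≤ f k + f l) : ∀ m, m ≠ k → m ≠ l → f m = 0 := by
  have hsub : ({k, l} : Finset (Fin d)) ⊆ univ := subset_univ _
  have := Finset.sum_sdiff hsub (f := f)
  rw [Finset.sum_pair hkl] at this
  have hz : ∑ m ∈ univ \ {k, l}, f m = 0 :=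
    le_antisymm (by omega) (Finset.sum_nonneg fun m _ => hf m)
  intro m hm1 hm2
  exact (Finset.sum_eq_zero_iff_of_nonneg fun m' _ => hf m').1 hz m
    (by simp [Finset.mem_sdiff, hm1, hm2])

lemma sum_outside_pair {f : Fin d → ℤ} {k l : Fin d} (hkl : k ≠ l)
    (h : ∀ m, m ≠ k → m ≠ l → f m = 0) : ∑ m, f m = f k + f l := by
  rw [← Finset.sum_pair hkl]
  exact (Finset.sum_subset (subset_univ _) (fun m _ hm => by
    simp only [Finset.mem_insert, Finset.mem_singleton, not_or] at hm
    exact h m hm.1 hm.2)).symm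
end helpers

def CRep (d : ℕ) (r c : Fin d → ℤ) (τ : ℤ) : Prop :=
  ∃ x y : Fin d → Fin d → ℕ,
    (∀ j, ((∑ i, (x i j : ℤ)) + ∑ k, ∑ l, if k < l then (y k l : ℤ) *
        ((if j = k then (1:ℤ) else 0) + (if j = l then 1 else 0)) else 0) = c j) ∧
    (∀ i, ((∑ j, (x i j : ℤ)) + ∑ k, ∑ l, if k < l then (y k l : ℤ) *
        ((if i = k then (1:ℤ) else 0) + (if i = l then 1 else 0)) else 0) = r i) ∧
    ((∑ i, (x i i : ℤ)) + ∑ k, ∑ l, if k < l then (y k l : ℤ) else 0) = τ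

lemma step_a {d : ℕ} (r c : Fin d → ℤ) (τ : ℤ) (i0 j0 : Fin d)
    (h : CRep d (fun m => r m - if m = i0 then 1 else 0)
      (fun m => c m - if m = j0 then 1 else 0) (τ - if i0 = j0 then 1 else 0)) :
    CRep d r c τ := by
  obtain ⟨x, y, h1, h2, h3⟩ := h
  dsimp only at h1 h2 h3
  refine ⟨fun i j => x i j + if i = i0 ∧ j = j0 then 1 else 0, y, ?_, ?_, ?_⟩
  · intro j
    have e1 : (∑ i, ((x i j + if i = i0 ∧ j = j0 then 1 else 0 : ℕ) : ℤ)) =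
        (∑ i, (x i j : ℤ)) + (if j = j0 then 1 else 0) := by
      push_cast
      rw [Finset.sum_add_distrib]
      congr 1
      simp [ite_and, Finset.sum_ite_eq]
    rw [e1]
    have := h1 j
    split_ifs at this ⊢ <;> linarith
  · intro i
    have e1 : (∑ j, ((x i j + if i = i0 ∧ j = j0 then 1 else 0 : ℕ) : ℤ)) =
        (∑ j, (x i j : ℤ)) + (if i = i0 then 1 else 0) := by
      push_cast
      rw [Finset.sum_add_distrib]
      congr 1
      by_cases hi : i = i0 <;> simp [hi, ite_and, Finset.sum_ite_eq]
    rw [e1]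
    have := h2 i
    split_ifs at this ⊢ <;> linarith
  · have e1 : (∑ i, ((x i i + if i = i0 ∧ i = j0 then 1 else 0 : ℕ) : ℤ)) =
        (∑ i, (x i i : ℤ)) + (if i0 = j0 then 1 else 0) := by
      push_cast
      rw [Finset.sum_add_distrib]
      congr 1
      have : ∀ i : Fin d, (if i = i0 ∧ i = j0 then (1:ℤ) else 0) =
          (if i0 = j0 then (if i = i0 then (1:ℤ) else 0) else 0) := by
        intro i
        rcases eq_or_ne i0 j0 with rfl | hne
        · simp [and_self]
        · rw [if_neg (fun h : _ ∧ _ => hne (h.1.symm.trans h.2)), if_neg hne]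
      rw [Finset.sum_congr rfl fun i _ => this i]
      split_ifs <;> simp [Finset.sum_ite_eq]
    rw [e1]
    split_ifs at h3 ⊢ <;> linarith

lemma step_h {d : ℕ} (r c : Fin d → ℤ) (τ : ℤ) (k0 l0 : Fin d) (hkl : k0 < l0)
    (h : CRep d
      (fun m => r m - (if m = k0 then 1 else 0) - (if m = l0 then 1 else 0))
      (fun m => c m - (if m = k0 then 1 else 0) - (if m = l0 then 1 else 0)) (τ - 1)) :
    CRep d r c τ := by
  obtain ⟨x, y, h1, h2, h3⟩ := h
  dsimp only at h1 h2 h3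
  have key : ∀ w : Fin d → Fin d → ℤ,
      (∑ k, ∑ l, if k < l then ((y k l + if k = k0 ∧ l = l0 then 1 else 0 : ℕ) : ℤ) * w k l else 0)
      = (∑ k, ∑ l, if k < l then (y k l : ℤ) * w k l else 0) + w k0 l0 := by
    intro w
    have e : ∀ k l : Fin d, (if k < l then ((y k l + if k = k0 ∧ l = l0 then 1 else 0 : ℕ) : ℤ) * w k l else 0)
        = (if k < l then (y k l : ℤ) * w k l else 0) +
          (if k = k0 then (if l = l0 then w k0 l0 else 0) else 0) := by
      intro k l
      by_cases hk : k = k0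
      · subst hk
        by_cases hl : l = l0
        · subst hl; simp only [and_self, if_true, hkl, if_pos]; push_cast; ring
        · simp [hl]
      · simp [hk]
    simp only [e, Finset.sum_add_distrib]
    congr 1
    simp [Finset.sum_ite_eq', Finset.sum_ite_eq]
  refine ⟨x, fun k l => y k l + if k = k0 ∧ l = l0 then 1 else 0, ?_, ?_, ?_⟩
  · intro j
    rw [key]
    have := h1 j
    split_ifs at this ⊢ <;> linarith
  · intro i
    rw [key]
    have := h2 i
    split_ifs at this ⊢ <;> linarith
  · have := key (fun _ _ => (1:ℤ))
    simp only [mul_one] at this ⊢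
    rw [this]
    linarith

def Good (d n : ℕ) : Prop := ∀ (r c : Fin d → ℤ) (τ : ℤ),
  (∀ i, 0 ≤ r i) → (∀ j, 0 ≤ c j) → (∑ i, r i) = (n : ℤ) → (∑ j, c j) = (n : ℤ) →
  0 ≤ τ → (∑ i, max 0 (r i + c i - (n : ℤ))) ≤ τ → τ ≤ ∑ i, min (r i) (c i) →
  CRep d r c τ

lemma good_zero (d : ℕ) : Good d 0 := by
  intro r c τ hr hc hsr hsc hτ0 hL hU
  have hr0 : ∀ i, r i = 0 := fun i =>
    le_antisymm (by have := single_le r hr i; omega) (hr i)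
  have hc0 : ∀ j, c j = 0 := fun j =>
    le_antisymm (by have := single_le c hc j; omega) (hc j)
  have hU0 : (∑ i, min (r i) (c i)) = 0 :=
    Finset.sum_eq_zero fun i _ => by simp [hr0, hc0]
  have hτ : τ = 0 := le_antisymm (by omega) hτ0
  subst hτ
  refine ⟨fun _ _ => 0, fun _ _ => 0, ?_, ?_, ?_⟩ <;>
    simp [hr0, hc0]

lemma caseA {d N : ℕ} (hN : 1 ≤ N) (ih : ∀ K, K < N → Good d K)
    (r c : Fin d → ℤ) (τ : ℤ)
    (hr : ∀ i, 0 ≤ r i) (hc : ∀ j, 0 ≤ c j)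
    (hsr : (∑ i, r i) = (N : ℤ)) (hsc : (∑ j, c j) = (N : ℤ))
    (hτ0 : 0 ≤ τ) (hL : (∑ i, max 0 (r i + c i - (N : ℤ))) ≤ τ)
    (hU : τ ≤ ∑ i, min (r i) (c i))
    (i : Fin d) (hi : (N : ℤ) + 1 ≤ r i + c i) : CRep d r c τ := by
  have hciN : c i ≤ (N : ℤ) := by have := single_le c hc i; omega
  have hriN : r i ≤ (N : ℤ) := by have := single_le r hr i; omega
  have hri1 : 1 ≤ r i := by omega
  have hci1 : 1 ≤ c i := by omega
  have hti : r i + c i - N ≤ τ := by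
    have h1 : max 0 (r i + c i - N) ≤ ∑ m, max 0 (r m + c m - (N:ℤ)) :=
      single_le _ (fun m => le_max_left 0 _) i
    omega
  have hothers : ∀ m, m ≠ i → r m + c m ≤ (N : ℤ) - 1 := by
    intro m hm
    have h1 : r i + r m ≤ (N : ℤ) := by
      have := pair_le_sum r hr (Ne.symm hm); omega
    have h2 : c i + c m ≤ (N : ℤ) := by
      have := pair_le_sum c hc (Ne.symm hm); omega
    omega
  apply step_a r c τ i i
  rw [if_pos rfl]
  have hcast : ((N - 1 : ℕ) : ℤ) = (N : ℤ) - 1 := by omega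
  apply ih (N - 1) (by omega)
  · intro m; have := hr m; by_cases h : m = i <;> simp [h] <;> omega
  · intro m; have := hc m; by_cases h : m = i <;> simp [h] <;> omega
  · rw [sub_ind r i, hcast, hsr]
  · rw [sub_ind c i, hcast, hsc]
  · omega
  · -- L'
    rw [hcast]
    have hsplit := Finset.add_sum_erase univ
      (fun m => max 0 ((r m - if m = i then 1 else 0) + (c m - if m = i then 1 else 0) - ((N:ℤ) - 1)))
      (mem_univ i)
    rw [← hsplit]
    have hz : ∑ m ∈ univ.erase i,
        max 0 ((r m - if m = i then 1 else 0) + (c m - if m = i then 1 else 0) - ((N:ℤ) - 1)) = 0 := by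
      apply Finset.sum_eq_zero
      intro m hm
      have hmi : m ≠ i := (Finset.mem_erase.1 hm).1
      rw [if_neg hmi]
      have := hothers m hmi
      omega
    rw [hz]
    rw [if_pos rfl]
    omega
  · -- U'
    have he : ∑ m, min (r m - if m = i then 1 else 0) (c m - if m = i then 1 else 0)
        = ∑ m, (min (r m) (c m) - if m = i then 1 else 0) := by
      apply Finset.sum_congr rfl
      intro m _
      by_cases h : m = i <;> simp [h] <;> omega
    rw [he, sub_ind (fun m => min (r m) (c m)) i]
    omega

lemma caseDiag {d N : ℕ} (hN : 1 ≤ N) (ih : ∀ K, K < N → Good d K)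
    (r c : Fin d → ℤ) (τ : ℤ)
    (hr : ∀ i, 0 ≤ r i) (hc : ∀ j, 0 ≤ c j)
    (hsr : (∑ i, r i) = (N : ℤ)) (hsc : (∑ j, c j) = (N : ℤ))
    (hU : τ ≤ ∑ i, min (r i) (c i))
    (i : Fin d) (hmin : 1 ≤ min (r i) (c i)) (hτ1 : 1 ≤ τ)
    (hcov : ∀ m, m ≠ i → r m + c m ≤ (N : ℤ) - 1) (hAi : r i + c i ≤ (N : ℤ)) :
    CRep d r c τ := by
  have hri1 : 1 ≤ r i := by omega
  have hci1 : 1 ≤ c i := by omega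
  apply step_a r c τ i i
  rw [if_pos rfl]
  have hcast : ((N - 1 : ℕ) : ℤ) = (N : ℤ) - 1 := by omega
  apply ih (N - 1) (by omega)
  · intro m; have := hr m; by_cases h : m = i <;> simp [h] <;> omega
  · intro m; have := hc m; by_cases h : m = i <;> simp [h] <;> omega
  · rw [sub_ind r i, hcast, hsr]
  · rw [sub_ind c i, hcast, hsc]
  · omega
  · rw [hcast]
    have hz : ∑ m, max 0 ((r m - if m = i then 1 else 0) + (c m - if m = i then 1 else 0) - ((N:ℤ) - 1)) = 0 := by
      apply Finset.sum_eq_zero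
      intro m _
      by_cases h : m = i
      · subst h; rw [if_pos rfl]; omega
      · rw [if_neg h]; have := hcov m h; omega
    rw [hz]; omega
  · have he : ∑ m, min (r m - if m = i then 1 else 0) (c m - if m = i then 1 else 0)
        = ∑ m, (min (r m) (c m) - if m = i then 1 else 0) := by
      apply Finset.sum_congr rfl
      intro m _
      by_cases h : m = i <;> simp [h] <;> omega
    rw [he, sub_ind (fun m => min (r m) (c m)) i]
    omega

lemma caseOffdiag {d N : ℕ} (hN : 1 ≤ N) (ih : ∀ K, K < N → Good d K)
    (r c : Fin d → ℤ)
    (hr : ∀ i, 0 ≤ r i) (hc : ∀ j, 0 ≤ c j)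
    (hsr : (∑ i, r i) = (N : ℤ)) (hsc : (∑ j, c j) = (N : ℤ))
    (hA' : ∀ m, r m + c m ≤ (N : ℤ))
    (i j : Fin d) (hij : i ≠ j) (hri : 1 ≤ r i) (hcj : 1 ≤ c j)
    (hcov : ∀ m, m ≠ i → m ≠ j → r m + c m ≤ (N : ℤ) - 1) :
    CRep d r c 0 := by
  apply step_a r c 0 i j
  rw [if_neg hij, sub_zero]
  have hcast : ((N - 1 : ℕ) : ℤ) = (N : ℤ) - 1 := by omega
  apply ih (N - 1) (by omega)
  · intro m; have := hr m; by_cases h : m = i <;> simp [h] <;> omega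
  · intro m; have := hc m; by_cases h : m = j <;> simp [h] <;> omega
  · rw [sub_ind r i, hcast, hsr]
  · rw [sub_ind c j, hcast, hsc]
  · omega
  · rw [hcast]
    have hz : ∑ m, max 0 ((r m - if m = i then 1 else 0) + (c m - if m = j then 1 else 0) - ((N:ℤ) - 1)) = 0 := by
      apply Finset.sum_eq_zero
      intro m _
      by_cases h1 : m = i
      · subst h1; rw [if_pos rfl]; have := hA' m; split_ifs <;> omega
      · rw [if_neg h1]
        by_cases h2 : m = j
        · subst h2; rw [if_pos rfl]; have := hA' m; omega
        · rw [if_neg h2]; have := hcov m h1 h2; omega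
    rw [hz]
  · apply Finset.sum_nonneg
    intro m _
    have h1' := hr m; have h2' := hc m
    by_cases h1 : m = i
    · subst h1; rw [if_pos rfl, if_neg hij]; omega
    · rw [if_neg h1]
      by_cases h2 : m = j
      · subst h2; rw [if_pos rfl]; omega
      · rw [if_neg h2]; omega

lemma caseTightPairH {d N : ℕ} (ih : ∀ K, K < N → Good d K)
    (r c : Fin d → ℤ) (τ : ℤ)
    (hr : ∀ i, 0 ≤ r i) (hc : ∀ j, 0 ≤ c j)
    (hsr : (∑ i, r i) = (N : ℤ)) (hsc : (∑ j, c j) = (N : ℤ))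
    (k l : Fin d) (hkl : k < l) (htk : r k + c k = (N : ℤ)) (htl : r l + c l = (N : ℤ))
    (hτ1 : 1 ≤ τ) (hlt : τ < ∑ i, min (r i) (c i)) :
    CRep d r c τ := by
  have hne : k ≠ l := ne_of_lt hkl
  have hs2 : ∑ m, (r m + c m) = (N : ℤ) + (N : ℤ) := by
    rw [Finset.sum_add_distrib, hsr, hsc]
  have hv : ∀ m, m ≠ k → m ≠ l → r m = 0 ∧ c m = 0 := by
    intro m h1 h2
    have := pairvanish (f := fun m' => r m' + c m')
      (fun m' => by have := hr m'; have := hc m'; omega) hne (by omega) m h1 h2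
    constructor <;> [have := hr m; have := hc m] <;> have := hc m <;> have := hr m <;> omega
  have hrkl : r k + r l = (N : ℤ) := by
    have := sum_outside_pair hne (f := r) (fun m h1 h2 => (hv m h1 h2).1)
    omega
  have hckl : c k + c l = (N : ℤ) := by
    have := sum_outside_pair hne (f := c) (fun m h1 h2 => (hv m h1 h2).2)
    omega
  have hck : c k = r l := by omega
  have hcl : c l = r k := by omega
  have hUval : ∑ i, min (r i) (c i) = min (r k) (c k) + min (r l) (c l) := by
    apply sum_outside_pair hne
    intro m h1 h2
    have := (hv m h1 h2).1; have := (hv m h1 h2).2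
    omega
  have hmin : 1 ≤ min (r k) (c k) ∧ 1 ≤ min (r l) (c l) := by
    rw [hUval] at hlt
    omega
  have hN2 : 2 ≤ (N : ℤ) := by omega
  apply step_h r c τ k l hkl
  have hcast : ((N - 2 : ℕ) : ℤ) = (N : ℤ) - 2 := by omega
  apply ih (N - 2) (by omega)
  · intro m; have := hr m
    by_cases h1 : m = k <;> by_cases h2 : m = l <;> simp_all <;> omega
  · intro m; have := hc m
    by_cases h1 : m = k <;> by_cases h2 : m = l <;> simp_all <;> omega
  · rw [sub_ind2 r k l hne, hcast, hsr]
  · rw [sub_ind2 c k l hne, hcast, hsc]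
  · omega
  · rw [hcast]
    have hz : ∑ m, max 0 ((r m - (if m = k then 1 else 0) - (if m = l then 1 else 0))
        + (c m - (if m = k then 1 else 0) - (if m = l then 1 else 0)) - ((N:ℤ) - 2)) = 0 := by
      apply Finset.sum_eq_zero
      intro m _
      by_cases h1 : m = k
      · subst h1; rw [if_pos rfl, if_neg hne]; omega
      · rw [if_neg h1]
        by_cases h2 : m = l
        · subst h2; rw [if_pos rfl]; omega
        · rw [if_neg h2]; have := (hv m h1 h2).1; have := (hv m h1 h2).2; omega
    rw [hz]; omega
  · have he : ∑ m, min (r m - (if m = k then 1 else 0) - (if m = l then 1 else 0))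
        (c m - (if m = k then 1 else 0) - (if m = l then 1 else 0))
        = ∑ m, (min (r m) (c m) - (if m = k then 1 else 0) - (if m = l then 1 else 0)) := by
      apply Finset.sum_congr rfl
      intro m _
      by_cases h1 : m = k <;> by_cases h2 : m = l <;> simp_all <;> omega
    rw [he, sub_ind2 (fun m => min (r m) (c m)) k l hne, hUval]
    rw [hUval] at hlt
    omega

lemma caseTightPairEq {d N : ℕ} (hN : 1 ≤ N) (ih : ∀ K, K < N → Good d K)
    (r c : Fin d → ℤ) (τ : ℤ)
    (hr : ∀ i, 0 ≤ r i) (hc : ∀ j, 0 ≤ c j)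
    (hsr : (∑ i, r i) = (N : ℤ)) (hsc : (∑ j, c j) = (N : ℤ))
    (k l : Fin d) (hne : k ≠ l) (htk : r k + c k = (N : ℤ)) (htl : r l + c l = (N : ℤ))
    (hτ1 : 1 ≤ τ) (hτU : τ = ∑ i, min (r i) (c i)) :
    CRep d r c τ := by
  have hv : ∀ m, m ≠ k → m ≠ l → r m = 0 ∧ c m = 0 := by
    have hs2 : ∑ m, (r m + c m) = (N : ℤ) + (N : ℤ) := by
      rw [Finset.sum_add_distrib, hsr, hsc]
    intro m h1 h2
    have := pairvanish (f := fun m' => r m' + c m')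
      (fun m' => by have := hr m'; have := hc m'; omega) hne (by omega) m h1 h2
    have := hc m; have := hr m
    omega
  have hrkl : r k + r l = (N : ℤ) := by
    have := sum_outside_pair hne (f := r) (fun m h1 h2 => (hv m h1 h2).1)
    omega
  have hckl : c k + c l = (N : ℤ) := by
    have := sum_outside_pair hne (f := c) (fun m h1 h2 => (hv m h1 h2).2)
    omega
  have hck : c k = r l := by omega
  have hcl : c l = r k := by omega
  have hUval : ∑ i, min (r i) (c i) = min (r k) (c k) + min (r l) (c l) := by
    apply sum_outside_pair hne
    intro m h1 h2
    have := (hv m h1 h2).1; have := (hv m h1 h2).2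
    omega
  have hmink : 1 ≤ min (r k) (c k) ∧ 1 ≤ min (r l) (c l) := by
    rw [hUval] at hτU
    omega
  have hτ2 : 2 ≤ τ := by
    rw [hUval] at hτU
    omega
  apply step_a r c τ k k
  rw [if_pos rfl]
  have hcast : ((N - 1 : ℕ) : ℤ) = (N : ℤ) - 1 := by omega
  apply ih (N - 1) (by omega)
  · intro m; have := hr m; by_cases h : m = k <;> simp [h] <;> omega
  · intro m; have := hc m; by_cases h : m = k <;> simp [h] <;> omega
  · rw [sub_ind r k, hcast, hsr]
  · rw [sub_ind c k, hcast, hsc]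
  · omega
  · rw [hcast]
    have h0 : ∀ m, m ≠ k → m ≠ l → max 0 ((r m - if m = k then 1 else 0) + (c m - if m = k then 1 else 0) - ((N:ℤ) - 1)) = 0 := by
      intro m h1 h2
      rw [if_neg h1]
      have := (hv m h1 h2).1; have := (hv m h1 h2).2
      omega
    have hone := sum_outside_pair hne h0
    rw [hone, if_pos rfl, if_neg (Ne.symm hne)]
    omega
  · have he : ∑ m, min (r m - if m = k then 1 else 0) (c m - if m = k then 1 else 0)
        = ∑ m, (min (r m) (c m) - if m = k then 1 else 0) := by
      apply Finset.sum_congr rfl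
      intro m _
      by_cases h : m = k <;> simp [h] <;> omega
    rw [he, sub_ind (fun m => min (r m) (c m)) k]
    omega

lemma good_all (d : ℕ) : ∀ N : ℕ, Good d N := by
  intro N
  induction N using Nat.strong_induction_on with
  | _ N ih =>
  rcases Nat.eq_zero_or_pos N with rfl | hN
  · exact good_zero d
  intro r c τ hr hc hsr hsc hτ0 hL hU
  have hadd : ∀ m : Fin d, 0 ≤ r m + c m := fun m => by have := hr m; have := hc m; omega
  by_cases hA : ∃ i, (N : ℤ) + 1 ≤ r i + c i
  · obtain ⟨i, hi⟩ := hA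
    exact caseA hN ih r c τ hr hc hsr hsc hτ0 hL hU i hi
  push_neg at hA
  have hA' : ∀ m, r m + c m ≤ (N : ℤ) := fun m => by have := hA m; omega
  have hs2 : ∑ m, (r m + c m) = (N : ℤ) + (N : ℤ) := by
    rw [Finset.sum_add_distrib, hsr, hsc]
  rcases eq_or_lt_of_le hτ0 with hτz | hτ1
  · -- τ = 0
    obtain rfl : τ = 0 := hτz.symm
    by_cases hT : ∃ m0, r m0 + c m0 = (N : ℤ)
    · obtain ⟨m0, hm0⟩ := hT
      by_cases hrm : 1 ≤ r m0
      · -- i = m0, find j ≠ m0 with c j ≥ 1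
        have hser : ∑ j ∈ univ.erase m0, c j = (N : ℤ) - c m0 := by
          rw [Finset.sum_erase_eq_sub (mem_univ m0), hsc]
        obtain ⟨j, hjmem, hcj⟩ := exists_one_le (fun m _ => hc m) (by rw [hser]; omega)
        have hjm0 : j ≠ m0 := (Finset.mem_erase.1 hjmem).1
        have hcov : ∀ m, m ≠ m0 → m ≠ j → r m + c m ≤ (N : ℤ) - 1 := by
          intro m h1 h2
          by_contra hcon
          push_neg at hcon
          have hmN : r m + c m = (N : ℤ) := by have := hA' m; omega
          have hv := pairvanish (f := fun m' => r m' + c m')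
            (fun m' => by exact hadd m') (show m0 ≠ m from fun e => h1 e.symm)
            (by omega) j hjm0 (fun e => h2 e.symm)
          have := hr j; omega
        exact caseOffdiag hN ih r c hr hc hsr hsc hA' m0 j (fun e => hjm0 e.symm) hrm hcj hcov
      · -- r m0 = 0, c m0 = N; j = m0, find i ≠ m0 with r i ≥ 1
        have hcm0 : c m0 = (N : ℤ) := by have := hr m0; omega
        have hser : ∑ i ∈ univ.erase m0, r i = (N : ℤ) - r m0 := by
          rw [Finset.sum_erase_eq_sub (mem_univ m0), hsr]
        obtain ⟨i, himem, hri⟩ := exists_one_le (fun m _ => hr m) (by rw [hser]; omega)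
        have him0 : i ≠ m0 := (Finset.mem_erase.1 himem).1
        have hcov : ∀ m, m ≠ i → m ≠ m0 → r m + c m ≤ (N : ℤ) - 1 := by
          intro m h1 h2
          by_contra hcon
          push_neg at hcon
          have hmN : r m + c m = (N : ℤ) := by have := hA' m; omega
          have hv := pairvanish (f := fun m' => r m' + c m')
            (fun m' => by exact hadd m') (show m0 ≠ m from fun e => h2 e.symm)
            (by omega) i him0 (fun e => h1 e.symm)
          have := hc i; omega
        exact caseOffdiag hN ih r c hr hc hsr hsc hA' i m0 him0 hri (by omega) hcov
    · -- no tight index at all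
      push_neg at hT
      have hcovAll : ∀ m, r m + c m ≤ (N : ℤ) - 1 := by
        intro m
        have := hA' m; have := hT m; omega
      obtain ⟨i, -, hri⟩ := exists_one_le (fun m _ => hr m) (by rw [hsr]; omega)
      have hci : c i ≤ (N : ℤ) - 2 := by have := hcovAll i; omega
      have hser : ∑ j ∈ univ.erase i, c j = (N : ℤ) - c i := by
        rw [Finset.sum_erase_eq_sub (mem_univ i), hsc]
      obtain ⟨j, hjmem, hcj⟩ := exists_one_le (fun m _ => hc m) (by rw [hser]; omega)
      have hji : j ≠ i := (Finset.mem_erase.1 hjmem).1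
      exact caseOffdiag hN ih r c hr hc hsr hsc hA' i j (Ne.symm hji) hri hcj
        (fun m _ _ => hcovAll m)
  · -- 1 ≤ τ
    by_cases hS2 : ∃ k l, k ≠ l ∧ r k + c k = (N : ℤ) ∧ r l + c l = (N : ℤ)
    · obtain ⟨k, l, hkl, htk, htl⟩ := hS2
      by_cases hτU : τ = ∑ i, min (r i) (c i)
      · exact caseTightPairEq hN ih r c τ hr hc hsr hsc k l hkl htk htl hτ1 hτU
      · have hlt : τ < ∑ i, min (r i) (c i) := lt_of_le_of_ne hU hτU
        rcases lt_or_gt_of_ne hkl with h | h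
        · exact caseTightPairH ih r c τ hr hc hsr hsc k l h htk htl hτ1 hlt
        · exact caseTightPairH ih r c τ hr hc hsr hsc l k h htl htk hτ1 hlt
    · by_cases hT : ∃ m0, r m0 + c m0 = (N : ℤ)
      · obtain ⟨m0, hm0⟩ := hT
        have hcov : ∀ m, m ≠ m0 → r m + c m ≤ (N : ℤ) - 1 := by
          intro m hm
          by_contra hcon
          push_neg at hcon
          exact hS2 ⟨m0, m, fun e => hm e.symm, hm0, by have := hA' m; omega⟩
        have hmin : 1 ≤ min (r m0) (c m0) := by
          by_contra hcon
          push_neg at hcon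
          have hUz : ∑ i, min (r i) (c i) ≤ 0 := by
            apply Finset.sum_nonpos
            intro m _
            rcases le_or_gt (r m0) (c m0) with hcase | hcase
            · -- r m0 = 0 hence c m0 = N, all other c vanish
              have hrm0 : r m0 = 0 := by have := hr m0; omega
              have hcv := singlevanish hc (i := m0) (by rw [hsc]; omega)
              by_cases h : m = m0
              · subst h; omega
              · have := hcv m h; have := hr m; omega
            · have hcm0 : c m0 = 0 := by have := hc m0; omega
              have hrv := singlevanish hr (i := m0) (by rw [hsr]; omega)
              by_cases h : m = m0
              · subst h; omega
              · have := hrv m h; have := hc m; omega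
          omega
        exact caseDiag hN ih r c τ hr hc hsr hsc hU m0 hmin hτ1 hcov (hA' m0)
      · push_neg at hT
        have hcovAll : ∀ m, r m + c m ≤ (N : ℤ) - 1 := by
          intro m; have := hA' m; have := hT m; omega
        have hUpos : 1 ≤ ∑ m, min (r m) (c m) := by omega
        obtain ⟨i, -, hmin⟩ := exists_one_le (f := fun m => min (r m) (c m))
          (fun m _ => le_min (hr m) (hc m)) hUpos
        exact caseDiag hN ih r c τ hr hc hsr hsc hU i hmin hτ1 (fun m _ => hcovAll m) (hA' i)

section assembly
variable {d : ℕ}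

lemma acol_idx1 (i j j0 : Fin d) : acol d i j (idx1 d j0) = if j = j0 then 1 else 0 := by
  have h1 := j0.isLt; have h2 := i.isLt; have h3 := j.isLt
  unfold acol
  simp only [show ((idx1 d j0 : Fin (2*d+1)) : ℕ) = (j0:ℕ) from rfl]
  rw [if_neg (by omega : ¬ (j0:ℕ) = d + (i:ℕ)),
    if_neg (by simp only [not_and]; omega : ¬ ((j0:ℕ) = 2*d ∧ i = j))]
  simp [Fin.val_eq_val, eq_comm]

lemma acol_idx2 (i j i0 : Fin d) : acol d i j (idx2 d i0) = if i = i0 then 1 else 0 := by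
  have h1 := i0.isLt; have h2 := i.isLt; have h3 := j.isLt
  unfold acol
  simp only [show ((idx2 d i0 : Fin (2*d+1)) : ℕ) = d + (i0:ℕ) from rfl]
  rw [if_neg (by omega : ¬ d + (i0:ℕ) = (j:ℕ)),
    if_neg (by simp only [not_and]; omega : ¬ (d + (i0:ℕ) = 2*d ∧ i = j))]
  have : (d + (i0:ℕ) = d + (i:ℕ)) ↔ (i = i0) := by
    rw [Fin.ext_iff]; omega
  simp [this, Fin.val_inj, eq_comm]

lemma acol_last (i j : Fin d) (t : Fin (2*d+1)) (ht : (t:ℕ) = 2*d) :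
    acol d i j t = if i = j then 1 else 0 := by
  have h2 := i.isLt; have h3 := j.isLt
  unfold acol
  rw [ht]
  rw [if_neg (by omega : ¬ 2*d = (j:ℕ)), if_neg (by omega : ¬ 2*d = d + (i:ℕ))]
  simp

lemma hvec_idx1 (k l j0 : Fin d) (hkl : k ≠ l) :
    hvec d k l (idx1 d j0) = (if j0 = k then 1 else 0) + (if j0 = l then 1 else 0) := by
  rw [hvec_apply k l hkl]
  have h1 := j0.isLt; have h2 := k.isLt; have h3 := l.isLt
  simp only [show ((idx1 d j0 : Fin (2*d+1)) : ℕ) = (j0:ℕ) from rfl]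
  rw [if_neg (by omega : ¬ (j0:ℕ) = d + (k:ℕ)), if_neg (by omega : ¬ (j0:ℕ) = d + (l:ℕ)),
    if_neg (by omega : ¬ (j0:ℕ) = 2*d)]
  simp [Fin.val_eq_val]

lemma hvec_idx2 (k l i0 : Fin d) (hkl : k ≠ l) :
    hvec d k l (idx2 d i0) = (if i0 = k then 1 else 0) + (if i0 = l then 1 else 0) := by
  rw [hvec_apply k l hkl]
  have h1 := i0.isLt; have h2 := k.isLt; have h3 := l.isLt
  simp only [show ((idx2 d i0 : Fin (2*d+1)) : ℕ) = d + (i0:ℕ) from rfl]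
  rw [if_neg (by omega : ¬ d + (i0:ℕ) = (k:ℕ)), if_neg (by omega : ¬ d + (i0:ℕ) = (l:ℕ)),
    if_neg (by omega : ¬ d + (i0:ℕ) = 2*d)]
  have ek : (d + (i0:ℕ) = d + (k:ℕ)) ↔ (i0 = k) := by rw [Fin.ext_iff]; omega
  have el : (d + (i0:ℕ) = d + (l:ℕ)) ↔ (i0 = l) := by rw [Fin.ext_iff]; omega
  simp [ek, el, Fin.val_inj, eq_comm]

lemma hvec_last (k l : Fin d) (hkl : k ≠ l) (t : Fin (2*d+1)) (ht : (t:ℕ) = 2*d) :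
    hvec d k l t = 1 := by
  rw [hvec_apply k l hkl, ht]
  have h2 := k.isLt; have h3 := l.isLt
  rw [if_neg (by omega : ¬ 2*d = (k:ℕ)), if_neg (by omega : ¬ 2*d = (l:ℕ)),
    if_neg (by omega : ¬ 2*d = d + (k:ℕ)), if_neg (by omega : ¬ 2*d = d + (l:ℕ)), if_pos rfl]
  ring
end assembly

/-- The set `H = {a_{ij}} ∪ {h_{kl} : k < l}` generates `Q_sat(A)` as a monoid:
every element of `Q_sat` is a nonnegative integer combination of elements of `H`. -/
theorem cdem_hilbert_basis (d : ℕ) (hd : 2 ≤ d) (z : Fin (2 * d + 1) → ℤ)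
    (hz : z ∈ cdemQsat d) :
    ∃ x : Fin d → Fin d → ℕ, ∃ y : Fin d → Fin d → ℕ,
      z = fun t => (∑ i, ∑ j, (x i j : ℤ) * acol d i j t) +
        ∑ k, ∑ l, if k < l then (y k l : ℤ) * hvec d k l t else 0 := by
  obtain ⟨w, hw0, hwz⟩ := hz
  have hzt : ∀ t, ((z t : ℤ) : ℝ) = ∑ i, ∑ j, w i j * ((acol d i j t : ℤ) : ℝ) :=
    fun t => congrFun hwz t
  set tlast : Fin (2 * d + 1) := ⟨2 * d, by omega⟩ with htlast
  have hC : ∀ j0 : Fin d, ((z (idx1 d j0) : ℤ) : ℝ) = ∑ i, w i j0 := by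
    intro j0
    rw [hzt]
    simp [acol_idx1, apply_ite (fun v : ℤ => (v : ℝ)), mul_ite, mul_one, mul_zero,
      Finset.sum_ite_eq']
  have hR : ∀ i0 : Fin d, ((z (idx2 d i0) : ℤ) : ℝ) = ∑ j, w i0 j := by
    intro i0
    rw [hzt, Finset.sum_comm]
    simp [acol_idx2, apply_ite (fun v : ℤ => (v : ℝ)), mul_ite, mul_one, mul_zero,
      Finset.sum_ite_eq']
  have hT : ((z tlast : ℤ) : ℝ) = ∑ i, w i i := by
    rw [hzt]
    have ha : ∀ i j : Fin d, acol d i j tlast = if i = j then 1 else 0 :=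
      fun i j => acol_last i j tlast rfl
    simp [ha, apply_ite (fun v : ℤ => (v : ℝ)), mul_ite, mul_one, mul_zero,
      Finset.sum_ite_eq]
  have hcc0 : ∀ j, 0 ≤ z (idx1 d j) := by
    intro j
    have h : (0:ℝ) ≤ ((z (idx1 d j) : ℤ) : ℝ) := by
      rw [hC j]; exact Finset.sum_nonneg fun i _ => hw0 i j
    exact_mod_cast h
  have hrr0 : ∀ i, 0 ≤ z (idx2 d i) := by
    intro i
    have h : (0:ℝ) ≤ ((z (idx2 d i) : ℤ) : ℝ) := by
      rw [hR i]; exact Finset.sum_nonneg fun j _ => hw0 i j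
    exact_mod_cast h
  have htt0 : 0 ≤ z tlast := by
    have h : (0:ℝ) ≤ ((z tlast : ℤ) : ℝ) := by
      rw [hT]; exact Finset.sum_nonneg fun i _ => hw0 i i
    exact_mod_cast h
  have hsum_eq : ∑ j, z (idx1 d j) = ∑ i, z (idx2 d i) := by
    have h : ((∑ j, z (idx1 d j) : ℤ) : ℝ) = ((∑ i, z (idx2 d i) : ℤ) : ℝ) := by
      push_cast
      simp only [hC, hR]
      exact Finset.sum_comm
    exact_mod_cast h
  set Nn : ℕ := (∑ i, z (idx2 d i)).toNat with hNndef
  have hNn : (Nn : ℤ) = ∑ i, z (idx2 d i) :=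
    Int.toNat_of_nonneg (Finset.sum_nonneg fun i _ => hrr0 i)
  have hNreal : ((Nn : ℕ) : ℝ) = ∑ i, ∑ j, w i j := by
    have h : ((Nn : ℤ) : ℝ) = ((∑ i, z (idx2 d i) : ℤ) : ℝ) := by exact_mod_cast hNn
    push_cast at h
    rw [h]
    simp only [hR]
  have hUint : z tlast ≤ ∑ i, min (z (idx2 d i)) (z (idx1 d i)) := by
    have h : ((z tlast : ℤ) : ℝ) ≤ ((∑ i, min (z (idx2 d i)) (z (idx1 d i)) : ℤ) : ℝ) := by
      push_cast
      rw [hT]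
      apply Finset.sum_le_sum
      intro i _
      apply le_min
      · rw [hR i]
        exact Finset.single_le_sum (fun j _ => hw0 i j) (mem_univ i)
      · rw [hC i]
        exact Finset.single_le_sum (fun i' _ => hw0 i' i) (mem_univ i)
    exact_mod_cast h
  have hLint : ∑ i, max 0 (z (idx2 d i) + z (idx1 d i) - (Nn : ℤ)) ≤ z tlast := by
    have h : ((∑ i, max 0 (z (idx2 d i) + z (idx1 d i) - (Nn : ℤ)) : ℤ) : ℝ)
        ≤ ((z tlast : ℤ) : ℝ) := by
      push_cast
      rw [hT]
      apply Finset.sum_le_sum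
      intro i _
      have hd1 : ((z (idx2 d i) : ℤ) : ℝ) = ∑ j, w i j := hR i
      have hd2 : ((z (idx1 d i) : ℤ) : ℝ) = ∑ i', w i' i := hC i
      have hsplit : ∑ i', ∑ j, w i' j = (∑ j, w i j) + ∑ i' ∈ univ.erase i, ∑ j, w i' j :=
        (Finset.add_sum_erase _ _ (mem_univ i)).symm
      have hge : ∑ i' ∈ univ.erase i, w i' i ≤ ∑ i' ∈ univ.erase i, ∑ j, w i' j :=
        Finset.sum_le_sum fun i' _ => Finset.single_le_sum (fun j _ => hw0 i' j) (mem_univ i)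
      have herase : ∑ i' ∈ univ.erase i, w i' i = (∑ i', w i' i) - w i i :=
        Finset.sum_erase_eq_sub (mem_univ i)
      apply max_le (hw0 i i)
      rw [hd1, hd2, hNreal]
      linarith
    exact_mod_cast h
  obtain ⟨x, y, hcol, hrow, htr⟩ :=
    good_all d Nn (fun i => z (idx2 d i)) (fun j => z (idx1 d j)) (z tlast)
      hrr0 hcc0 hNn.symm (by rw [hsum_eq, ← hNn]) htt0 hLint hUint
  refine ⟨x, y, ?_⟩
  funext t
  by_cases h1 : (t : ℕ) < d
  · have ht : t = idx1 d ⟨(t : ℕ), h1⟩ := Fin.ext rfl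
    rw [ht]
    have hcong : (∑ k, ∑ l, if k < l then (y k l : ℤ) * hvec d k l (idx1 d ⟨(t : ℕ), h1⟩) else 0)
        = ∑ k, ∑ l, if k < l then (y k l : ℤ) *
          ((if (⟨(t : ℕ), h1⟩ : Fin d) = k then (1:ℤ) else 0) +
           (if (⟨(t : ℕ), h1⟩ : Fin d) = l then 1 else 0)) else 0 := by
      apply Finset.sum_congr rfl; intro k _
      apply Finset.sum_congr rfl; intro l _
      by_cases h : k < l
      · rw [if_pos h, if_pos h, hvec_idx1 k l _ (ne_of_lt h)]
      · rw [if_neg h, if_neg h]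
    rw [hcong]
    have hx : (∑ i, ∑ j, (x i j : ℤ) * acol d i j (idx1 d ⟨(t : ℕ), h1⟩))
        = ∑ i, (x i ⟨(t : ℕ), h1⟩ : ℤ) := by
      apply Finset.sum_congr rfl; intro i _
      simp [acol_idx1, mul_ite, Finset.sum_ite_eq']
    rw [hx]
    exact (hcol ⟨(t : ℕ), h1⟩).symm
  · by_cases h2 : (t : ℕ) < 2 * d
    · obtain ⟨i0, hi0⟩ : ∃ i0 : Fin d, t = idx2 d i0 :=
        ⟨⟨(t : ℕ) - d, by omega⟩, Fin.ext (by simp [idx2]; omega)⟩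
      rw [hi0]
      have hcong : (∑ k, ∑ l, if k < l then (y k l : ℤ) * hvec d k l (idx2 d i0) else 0)
          = ∑ k, ∑ l, if k < l then (y k l : ℤ) *
            ((if i0 = k then (1:ℤ) else 0) +
             (if i0 = l then 1 else 0)) else 0 := by
        apply Finset.sum_congr rfl; intro k _
        apply Finset.sum_congr rfl; intro l _
        by_cases h : k < l
        · rw [if_pos h, if_pos h, hvec_idx2 k l _ (ne_of_lt h)]
        · rw [if_neg h, if_neg h]
      rw [hcong]
      have hx : (∑ i, ∑ j, (x i j : ℤ) * acol d i j (idx2 d i0))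
          = ∑ j, (x i0 j : ℤ) := by
        rw [Finset.sum_comm]
        apply Finset.sum_congr rfl; intro j _
        simp [acol_idx2, mul_ite, Finset.sum_ite_eq']
      rw [hx]
      exact (hrow i0).symm
    · have h3 : (t : ℕ) = 2 * d := by have := t.isLt; omega
      have ht : t = tlast := Fin.ext h3
      rw [ht]
      have hcong : (∑ k, ∑ l, if k < l then (y k l : ℤ) * hvec d k l tlast else 0)
          = ∑ k, ∑ l, if k < l then (y k l : ℤ) else 0 := by
        apply Finset.sum_congr rfl; intro k _
        apply Finset.sum_congr rfl; intro l _
        by_cases h : k < l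
        · rw [if_pos h, if_pos h, hvec_last k l (ne_of_lt h) tlast rfl, mul_one]
        · rw [if_neg h, if_neg h]
      rw [hcong]
      have hx : (∑ i, ∑ j, (x i j : ℤ) * acol d i j tlast) = ∑ i, (x i i : ℤ) := by
        apply Finset.sum_congr rfl; intro i _
        have ha : ∀ j : Fin d, acol d i j tlast = if i = j then 1 else 0 :=
          fun j => acol_last i j tlast rfl
        simp [ha, mul_ite, Finset.sum_ite_eq]
      rw [hx]
      exact htr.symm
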